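/- Let B ∈ GL(N,ℝ) have no eigenvalue of modulus 1 and let E^s, E^u be its stable and unstable subspaces. Consider the affine action of Γ = ℤ^N ⋊_B ℤ on ℂ^N given by ((b,n), z) ↦ Bⁿz + b. If U ⊆ ℂ^N is a Γ-invariant open set on which the Γ-action is properly discontinuous, and additionally for almost every real point orbits are dense in ℝ^N (as holds when B ∈ SL(N,ℤ) is a hyperbolic toral automorphism), then U ⊆ U⁺ or U ⊆ U⁻, where U⁻ = {z : the E^s-component of Im z ≠ 0} and U⁺ = {z : the E^u-component of Im z ≠ 0}. -/

import Mathlib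

open Matrix Filter MeasureTheory

/-- Integer power of a matrix, using the nonsingular inverse for negative exponents. -/
noncomputable def mzpow {N : ℕ} (A : Matrix (Fin N) (Fin N) ℝ) : ℤ → Matrix (Fin N) (Fin N) ℝ
  | (Int.ofNat n) => A ^ n
  | (Int.negSucc n) => A⁻¹ ^ (n + 1)

/-- Complexification of a real vector. -/
def cvec {N : ℕ} (v : Fin N → ℝ) : Fin N → ℂ := fun i => (v i : ℂ)

/-- The affine action of `ℤ^N ⋊_B ℤ` on `ℂ^N`: `((b,n), z) ↦ Bⁿz + b`. -/
noncomputable def discAct {N : ℕ} (B : Matrix (Fin N) (Fin N) ℝ)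
    (g : (Fin N → ℤ) × ℤ) (z : Fin N → ℂ) : Fin N → ℂ :=
  ((mzpow B g.2).map (Complex.ofReal ·)).mulVec z + cvec (fun i => (g.1 i : ℝ))

/-- The stable subspace of `B`: points with forward iterates tending to `0`. -/
def stableSetD {N : ℕ} (B : Matrix (Fin N) (Fin N) ℝ) : Set (Fin N → ℝ) :=
  {x | Tendsto (fun n : ℕ => (B ^ n).mulVec x) atTop (nhds 0)}

/-- The unstable subspace of `B`: points with backward iterates tending to `0`. -/
def unstableSetD {N : ℕ} (B : Matrix (Fin N) (Fin N) ℝ) : Set (Fin N → ℝ) :=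
  {x | Tendsto (fun n : ℕ => (B⁻¹ ^ n).mulVec x) atTop (nhds 0)}

/-- `U⁻`: points of `ℂ^N` whose imaginary part has nonzero stable component. -/
def UminusD {N : ℕ} (B : Matrix (Fin N) (Fin N) ℝ) : Set (Fin N → ℂ) :=
  {z | ∃ ys ∈ stableSetD B, ∃ yu ∈ unstableSetD B,
    (fun i => (z i).im) = ys + yu ∧ ys ≠ 0}

/-- `U⁺`: points of `ℂ^N` whose imaginary part has nonzero unstable component. -/
def UplusD {N : ℕ} (B : Matrix (Fin N) (Fin N) ℝ) : Set (Fin N → ℂ) :=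
  {z | ∃ ys ∈ stableSetD B, ∃ yu ∈ unstableSetD B,
    (fun i => (z i).im) = ys + yu ∧ yu ≠ 0}

section aux

variable {N : ℕ}

lemma cvec_add (v w : Fin N → ℝ) : cvec (v + w) = cvec v + cvec w := by
  funext i; simp [cvec]

lemma cvec_sub (v w : Fin N → ℝ) : cvec (v - w) = cvec v - cvec w := by
  funext i; simp [cvec]

lemma norm_cvec (v : Fin N → ℝ) : ‖cvec v‖ = ‖v‖ := by
  simp only [Pi.norm_def, cvec]
  congr 1
  apply Finset.sup_congr rfl
  intro i _
  simp

lemma continuous_cvec : Continuous (cvec : (Fin N → ℝ) → (Fin N → ℂ)) := by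
  apply continuous_pi
  intro i
  exact Complex.continuous_ofReal.comp (continuous_apply i)

lemma map_mulVec_cvec (M : Matrix (Fin N) (Fin N) ℝ) (v : Fin N → ℝ) :
    (M.map (Complex.ofReal ·)).mulVec (cvec v) = cvec (M.mulVec v) := by
  funext i
  simp [Matrix.mulVec, dotProduct, cvec, Matrix.map_apply]

lemma reIm_eq (z : Fin N → ℂ) :
    z = cvec (fun i => (z i).re) + Complex.I • cvec (fun i => (z i).im) := by
  funext i
  simp [cvec]
  rw [mul_comm]
  exact (Complex.re_add_im (z i)).symm

lemma mzpow_natCast (B : Matrix (Fin N) (Fin N) ℝ) (k : ℕ) : mzpow B (k : ℤ) = B ^ k := rfl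

lemma mzpow_neg_natCast (B : Matrix (Fin N) (Fin N) ℝ) (k : ℕ) :
    mzpow B (-(k : ℤ)) = B⁻¹ ^ k := by
  cases k with
  | zero =>
      show mzpow B (-(0:ℤ)) = B⁻¹ ^ 0
      rw [neg_zero]
      show B ^ 0 = B⁻¹ ^ 0
      simp
  | succ k => rfl

lemma discAct_decomp (B : Matrix (Fin N) (Fin N) ℝ) (b : Fin N → ℤ) (n : ℤ)
    (x y : Fin N → ℝ) :
    discAct B (b, n) (cvec x + Complex.I • cvec y)
      = cvec ((mzpow B n).mulVec x + fun i => (b i : ℝ))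
        + Complex.I • cvec ((mzpow B n).mulVec y) := by
  unfold discAct
  rw [Matrix.mulVec_add, Matrix.mulVec_smul, map_mulVec_cvec, map_mulVec_cvec, cvec_add]
  ring_nf

end aux

section aux2

variable {N : ℕ}

lemma pow_cancel {M P : Matrix (Fin N) (Fin N) ℝ} (h : M * P = 1) (k : ℕ) :
    M ^ k * P ^ k = 1 := by
  induction k with
  | zero => simp
  | succ k ih =>
      rw [pow_succ' M, pow_succ P, mul_assoc, ← mul_assoc (M ^ k), ih, one_mul, h]

lemma pow_mul_sub {M : Matrix (Fin N) (Fin N) ℝ} {P : Matrix (Fin N) (Fin N) ℝ}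
    (h : M * P = 1) {n k : ℕ} (hk : k ≤ n) : M ^ n * P ^ k = M ^ (n - k) := by
  have : M ^ n = M ^ (n - k) * M ^ k := by
    rw [← pow_add]; congr 1; omega
  rw [this, mul_assoc, pow_cancel h, mul_one]

/-- stableSetD is stable under multiplication by `B ^ k`. -/
lemma stable_pow_mem (B : Matrix (Fin N) (Fin N) ℝ) (k : ℕ) {y : Fin N → ℝ}
    (hy : y ∈ stableSetD B) : (B ^ k).mulVec y ∈ stableSetD B := by
  have : ∀ n : ℕ, (B ^ n).mulVec ((B ^ k).mulVec y) = (B ^ (n + k)).mulVec y := by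
    intro n; rw [Matrix.mulVec_mulVec, ← pow_add]
  unfold stableSetD at hy ⊢
  simp only [Set.mem_setOf_eq] at hy ⊢
  have h2 : Tendsto (fun n : ℕ => (B ^ (n + k)).mulVec y) atTop (nhds 0) :=
    hy.comp (tendsto_add_atTop_nat k)
  exact h2.congr (fun n => (this n).symm)

lemma stable_invpow_mem {B : Matrix (Fin N) (Fin N) ℝ} (h : B * B⁻¹ = 1) (k : ℕ)
    {y : Fin N → ℝ} (hy : y ∈ stableSetD B) : (B⁻¹ ^ k).mulVec y ∈ stableSetD B := by
  unfold stableSetD at hy ⊢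
  simp only [Set.mem_setOf_eq] at hy ⊢
  have h2 : Tendsto (fun n : ℕ => (B ^ (n - k)).mulVec y) atTop (nhds 0) :=
    hy.comp (tendsto_sub_atTop_nat k)
  apply h2.congr'
  filter_upwards [eventually_ge_atTop k] with n hn
  rw [Matrix.mulVec_mulVec, pow_mul_sub h hn]

lemma unstable_invpow_mem (B : Matrix (Fin N) (Fin N) ℝ) (k : ℕ) {y : Fin N → ℝ}
    (hy : y ∈ unstableSetD B) : (B⁻¹ ^ k).mulVec y ∈ unstableSetD B := by
  have : ∀ n : ℕ, (B⁻¹ ^ n).mulVec ((B⁻¹ ^ k).mulVec y) = (B⁻¹ ^ (n + k)).mulVec y := by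
    intro n; rw [Matrix.mulVec_mulVec, ← pow_add]
  unfold unstableSetD at hy ⊢
  simp only [Set.mem_setOf_eq] at hy ⊢
  have h2 : Tendsto (fun n : ℕ => (B⁻¹ ^ (n + k)).mulVec y) atTop (nhds 0) :=
    hy.comp (tendsto_add_atTop_nat k)
  exact h2.congr (fun n => (this n).symm)

lemma unstable_pow_mem {B : Matrix (Fin N) (Fin N) ℝ} (h : B⁻¹ * B = 1) (k : ℕ)
    {y : Fin N → ℝ} (hy : y ∈ unstableSetD B) : (B ^ k).mulVec y ∈ unstableSetD B := by
  unfold unstableSetD at hy ⊢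
  simp only [Set.mem_setOf_eq] at hy ⊢
  have h2 : Tendsto (fun n : ℕ => (B⁻¹ ^ (n - k)).mulVec y) atTop (nhds 0) :=
    hy.comp (tendsto_sub_atTop_nat k)
  apply h2.congr'
  filter_upwards [eventually_ge_atTop k] with n hn
  rw [Matrix.mulVec_mulVec, pow_mul_sub h hn]

lemma stable_mzpow_mem {B : Matrix (Fin N) (Fin N) ℝ} (h : B * B⁻¹ = 1) (e : ℤ)
    {y : Fin N → ℝ} (hy : y ∈ stableSetD B) : (mzpow B e).mulVec y ∈ stableSetD B := by
  cases e with
  | ofNat k => exact stable_pow_mem B k hy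
  | negSucc k => exact stable_invpow_mem h (k + 1) hy

lemma unstable_mzpow_mem {B : Matrix (Fin N) (Fin N) ℝ} (h : B⁻¹ * B = 1) (e : ℤ)
    {y : Fin N → ℝ} (hy : y ∈ unstableSetD B) : (mzpow B e).mulVec y ∈ unstableSetD B := by
  cases e with
  | ofNat k => exact unstable_pow_mem h k hy
  | negSucc k => exact unstable_invpow_mem B (k + 1) hy

end aux2
section extraction

variable {N : ℕ}

/-- integer vectors with bounded real entries form a finite set -/
lemma intvec_finite (C : ℝ) :
    {b : Fin N → ℤ | ∀ i, |(b i : ℝ)| ≤ C}.Finite := by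
  have h1 : {b : Fin N → ℤ | ∀ i, |(b i : ℝ)| ≤ C} ⊆
      Set.pi Set.univ (fun _ : Fin N => Set.Icc (-⌈C⌉) ⌈C⌉) := by
    intro b hb
    intro i _
    have := hb i
    have h2 : |b i| ≤ ⌈C⌉ := by
      have h3 : ((|b i| : ℤ) : ℝ) ≤ C := by rw [Int.cast_abs]; exact this
      exact_mod_cast h3.trans (Int.le_ceil C)
    rw [abs_le] at h2
    exact ⟨h2.1, h2.2⟩
  exact (Set.Finite.pi (fun _ => Set.finite_Icc _ _)).subset h1

lemma claimC (B : Matrix (Fin N) (Fin N) ℝ) (hN : 0 < N) {x : Fin N → ℝ}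
    (hden : Dense {y : Fin N → ℝ | ∃ (b : Fin N → ℤ) (n : ℤ),
      y = (mzpow B n).mulVec x + fun i => (b i : ℝ)}) (t : Fin N → ℝ) :
    ∀ ε > 0, ∀ M : ℕ, ∃ (b : Fin N → ℤ) (n : ℤ), M ≤ n.natAbs ∧
      dist ((mzpow B n).mulVec x + (fun i => (b i : ℝ))) t < ε := by
  by_contra hcon
  push_neg at hcon
  obtain ⟨ε, hε, M, hM⟩ := hcon
  -- the orbit points within distance ε of t all have |n| < M, so they form a finite set
  set F : Set (Fin N → ℝ) :=
    ⋃ n ∈ Set.Icc (-(M : ℤ)) (M : ℤ),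
      (fun b : Fin N → ℤ => (mzpow B n).mulVec x + fun i => (b i : ℝ)) ''
        {b : Fin N → ℤ | ∀ i, |(b i : ℝ)| ≤ ‖t‖ + ε + ‖(mzpow B n).mulVec x‖} with hF
  have hFfin : F.Finite := by
    apply Set.Finite.biUnion (Set.finite_Icc _ _)
    intro n _
    exact (intvec_finite _).image _
  have horb : ∀ y ∈ {y : Fin N → ℝ | ∃ (b : Fin N → ℤ) (n : ℤ),
      y = (mzpow B n).mulVec x + fun i => (b i : ℝ)}, dist y t < ε → y ∈ F := by
    rintro y ⟨b, n, rfl⟩ hdist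
    have hn : n.natAbs < M := by
      by_contra hn'
      push_neg at hn'
      exact absurd hdist (not_lt.mpr (hM b n hn'))
    have hnmem : n ∈ Set.Icc (-(M : ℤ)) (M : ℤ) := by
      constructor
      · omega
      · omega
    refine Set.mem_biUnion hnmem ⟨b, ?_, rfl⟩
    intro i
    have h1 : |((fun i => (b i : ℝ)) i)| ≤ ‖(fun i => (b i : ℝ))‖ := by
      have := norm_le_pi_norm (fun i => (b i : ℝ)) i
      simpa [Real.norm_eq_abs] using this
    have h2 : ‖(fun i => (b i : ℝ))‖ ≤ ‖t‖ + ε + ‖(mzpow B n).mulVec x‖ := by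
      have heq : (fun i => (b i : ℝ)) =
          (((mzpow B n).mulVec x + fun i => (b i : ℝ)) - t) + t - (mzpow B n).mulVec x := by
        abel
      rw [heq]
      have h3 := norm_sub_le ((((mzpow B n).mulVec x + fun i => (b i : ℝ)) - t) + t)
        ((mzpow B n).mulVec x)
      refine h3.trans ?_
      have h4 := norm_add_le (((mzpow B n).mulVec x + fun i => (b i : ℝ)) - t) t
      have h5 : ‖((mzpow B n).mulVec x + fun i => (b i : ℝ)) - t‖ ≤ ε :=
        le_of_lt (by rwa [← dist_eq_norm])
      linarith
    exact h1.trans h2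
  -- but the orbit is dense and the ball is infinite
  have hNon : (Metric.ball t ε \ F).Nonempty := by
    have hinf : (Metric.ball t ε).Infinite := by
      have : Nonempty (Fin N) := ⟨⟨0, hN⟩⟩
      have : Nontrivial (Fin N → ℝ) := inferInstance
      exact infinite_of_mem_nhds t (Metric.ball_mem_nhds t hε)
    exact (hinf.diff hFfin).nonempty
  have hopen : IsOpen (Metric.ball t ε \ F) := Metric.isOpen_ball.sdiff hFfin.isClosed
  obtain ⟨y, hy, hyV⟩ := hden.exists_mem_open hopen hNon
  exact hyV.2 (horb y hy (by simpa [Metric.mem_ball] using hyV.1))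

lemma sign_dichotomy (B : Matrix (Fin N) (Fin N) ℝ) (hN : 0 < N) {x : Fin N → ℝ}
    (hden : Dense {y : Fin N → ℝ | ∃ (b : Fin N → ℤ) (n : ℤ),
      y = (mzpow B n).mulVec x + fun i => (b i : ℝ)}) (t : Fin N → ℝ) :
    (∀ ε > 0, ∀ M : ℕ, ∃ (b : Fin N → ℤ) (k : ℕ), M ≤ k ∧
      dist ((B ^ k).mulVec x + (fun i => (b i : ℝ))) t < ε) ∨
    (∀ ε > 0, ∀ M : ℕ, ∃ (b : Fin N → ℤ) (k : ℕ), M ≤ k ∧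
      dist ((B⁻¹ ^ k).mulVec x + (fun i => (b i : ℝ))) t < ε) := by
  by_cases hplus : ∀ ε > 0, ∀ M : ℕ, ∃ (b : Fin N → ℤ) (k : ℕ), M ≤ k ∧
      dist ((B ^ k).mulVec x + (fun i => (b i : ℝ))) t < ε
  · exact Or.inl hplus
  · right
    push_neg at hplus
    obtain ⟨ε₁, hε₁, M₁, hM₁⟩ := hplus
    intro ε hε M
    obtain ⟨b, n, hn, hdist⟩ := claimC B hN hden t (min ε ε₁) (lt_min hε hε₁) (max M M₁)
    rcases Int.natAbs_eq n with he | he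
    · exfalso
      rw [he, mzpow_natCast] at hdist
      have h2 := hM₁ b n.natAbs (le_trans (le_max_right _ _) hn)
      exact absurd (hdist.trans_le (min_le_right _ _)) (not_lt.mpr h2)
    · refine ⟨b, n.natAbs, le_trans (le_max_left _ _) hn, ?_⟩
      rw [he, mzpow_neg_natCast] at hdist
      exact hdist.trans_le (min_le_left _ _)

/-- a conull set meets every ball -/
lemma conull_inter_ball {G : Set (Fin N → ℝ)} (hG : (volume : Measure (Fin N → ℝ)) Gᶜ = 0)
    (x : Fin N → ℝ) {ε : ℝ} (hε : 0 < ε) : ∃ y ∈ G, dist y x < ε := by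
  by_contra hcon
  push_neg at hcon
  have hsub : Metric.ball x ε ⊆ Gᶜ := by
    intro y hy
    intro hyG
    exact absurd (by simpa [Metric.mem_ball] using hy) (not_lt.mpr (hcon y hyG))
  have := measure_mono (μ := (volume : Measure (Fin N → ℝ))) hsub
  rw [hG] at this
  exact absurd (le_antisymm this zero_le)
    (ne_of_gt (Metric.measure_ball_pos _ _ hε))

end extraction
section spectral

variable {N : ℕ}

open Module Finset

/-- If `(f - μ)^k v = 0` with `|μ| < 1`, then `f^n v → 0`. -/
lemma tendsto_end_pow {V : Type*} [NormedAddCommGroup V] [NormedSpace ℂ V]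
    {f : Module.End ℂ V} {μ : ℂ} {k : ℕ} {v : V}
    (hμ : ‖μ‖ < 1) (hv : ((f - μ • 1) ^ k) v = 0) :
    Tendsto (fun n : ℕ => (f ^ n) v) atTop (nhds 0) := by
  classical
  set g : Module.End ℂ V := f - μ • 1 with hg
  have hfg : f = g + μ • 1 := by rw [hg]; abel
  have hgk : ∀ m : ℕ, k ≤ m → (g ^ m) v = 0 := by
    intro m hm
    have : g ^ m = g ^ (m - k) * g ^ k := by rw [← pow_add]; congr 1; omega
    rw [this, Module.End.mul_apply, hv, map_zero]
  by_cases hμ0 : μ = 0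
  · -- f^n v = 0 eventually
    have hfk : ∀ n : ℕ, k ≤ n → (f ^ n) v = 0 := by
      intro n hn
      have : f = g := by rw [hfg, hμ0]; simp
      rw [this]; exact hgk n hn
    apply tendsto_const_nhds.congr'
    filter_upwards [eventually_ge_atTop k] with n hn
    exact (hfk n hn).symm
  -- main case
  have hcomm : Commute g (μ • (1 : Module.End ℂ V)) :=
    (Commute.one_right g).smul_right μ
  have key : ∀ n : ℕ, k ≤ n → (f ^ n) v =
      ∑ m ∈ range k, (n.choose m : ℂ) • (μ ^ (n - m) • ((g ^ m) v)) := by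
    intro n hn
    rw [hfg, hcomm.add_pow]
    have happ : ((∑ m ∈ range (n + 1), g ^ m * (μ • (1:Module.End ℂ V)) ^ (n - m) *
        (n.choose m : Module.End ℂ V))) v =
        ∑ m ∈ range (n + 1), (n.choose m : ℂ) • (μ ^ (n - m) • ((g ^ m) v)) := by
      rw [LinearMap.sum_apply]
      apply Finset.sum_congr rfl
      intro m _
      rw [Module.End.mul_apply, Module.End.mul_apply]
      have h1 : ((n.choose m : Module.End ℂ V)) v = (n.choose m : ℂ) • v := by
        simp [Module.End.natCast_apply, Nat.cast_smul_eq_nsmul]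
      rw [h1]
      have h2 : (μ • (1:Module.End ℂ V)) ^ (n - m) = μ ^ (n - m) • 1 := by
        rw [smul_pow, one_pow]
      rw [h2]
      simp only [LinearMap.smul_apply, Module.End.one_apply, _root_.map_smul]
      try rw [smul_comm]
    rw [happ]
    rw [← Finset.sum_range_add_sum_Ico _ (by omega : k ≤ n + 1)]
    have hzero : ∑ m ∈ Finset.Ico k (n + 1), (n.choose m : ℂ) • (μ ^ (n - m) • ((g ^ m) v)) = 0 := by
      apply Finset.sum_eq_zero
      intro m hm
      rw [Finset.mem_Ico] at hm
      rw [hgk m hm.1]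
      simp
    rw [hzero, add_zero]
  set r := ‖μ‖ with hr
  have hr0 : 0 < r := by
    simp only [hr]
    exact norm_pos_iff.mpr hμ0
  -- the bounding sequence
  set D : ℕ → ℝ := fun m => ‖(g ^ m) v‖ with hD
  have hbound : ∀ n : ℕ, k ≤ n →
      ‖(f ^ n) v‖ ≤ ∑ m ∈ range k, (D m / r ^ m) * ((n : ℝ) ^ m * r ^ n) := by
    intro n hn
    rw [key n hn]
    refine (norm_sum_le _ _).trans ?_
    apply Finset.sum_le_sum
    intro m hm
    rw [Finset.mem_range] at hm
    have hmn : m ≤ n := by omega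
    rw [norm_smul, norm_smul]
    have h1 : ‖(n.choose m : ℂ)‖ = (n.choose m : ℝ) := by
      simp [Complex.norm_natCast]
    have h2 : ‖μ ^ (n - m)‖ = r ^ (n - m) := by
      rw [norm_pow]
    rw [h1, h2]
    have h3 : (n.choose m : ℝ) ≤ (n : ℝ) ^ m := by
      exact_mod_cast Nat.choose_le_pow n m
    have h4 : r ^ (n - m) = r ^ n / r ^ m := by
      rw [eq_div_iff (by positivity), ← pow_add]
      congr 1; omega
    have h5 : (0:ℝ) ≤ r ^ (n - m) := by positivity
    calc (n.choose m : ℝ) * (r ^ (n - m) * D m)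
        ≤ (n:ℝ) ^ m * (r ^ (n - m) * D m) := by
          apply mul_le_mul_of_nonneg_right h3
          have : (0:ℝ) ≤ D m := norm_nonneg _
          positivity
      _ = (D m / r ^ m) * ((n : ℝ) ^ m * r ^ n) := by
          rw [h4]; field_simp
  have hlim : Tendsto (fun n : ℕ => ∑ m ∈ range k, (D m / r ^ m) * ((n : ℝ) ^ m * r ^ n))
      atTop (nhds 0) := by
    have : (0:ℝ) = ∑ m ∈ range k, (D m / r ^ m) * 0 := by simp
    rw [this]
    apply tendsto_finset_sum
    intro m _
    have habs : |r| < 1 := by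
      rw [abs_of_pos hr0]; exact hμ
    have := tendsto_pow_const_mul_const_pow_of_abs_lt_one m habs
    have h2 := this.const_mul (D m / r ^ m)
    simpa using h2
  have : Tendsto (fun n : ℕ => ‖(f ^ n) v‖) atTop (nhds 0) := by
    apply squeeze_zero' (Eventually.of_forall (fun n => norm_nonneg _))
    · filter_upwards [eventually_ge_atTop k] with n hn
      exact hbound n hn
    · exact hlim
  exact tendsto_zero_iff_norm_tendsto_zero.mpr this

end spectral
section splitting

variable {N : ℕ}

open Module

lemma mapC_pow (M : Matrix (Fin N) (Fin N) ℝ) (n : ℕ) :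
    (M.map (Complex.ofReal ·)) ^ n = (M ^ n).map (Complex.ofReal ·) :=
  (map_pow (RingHom.mapMatrix (Complex.ofRealHom) :
    Matrix (Fin N) (Fin N) ℝ →+* Matrix (Fin N) (Fin N) ℂ) M n).symm

lemma mapC_mul (M P : Matrix (Fin N) (Fin N) ℝ) :
    (M * P).map (Complex.ofReal ·) = M.map (Complex.ofReal ·) * P.map (Complex.ofReal ·) :=
  map_mul (RingHom.mapMatrix (Complex.ofRealHom) :
    Matrix (Fin N) (Fin N) ℝ →+* Matrix (Fin N) (Fin N) ℂ) M P

lemma mapC_one : ((1 : Matrix (Fin N) (Fin N) ℝ)).map (Complex.ofReal ·)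
    = (1 : Matrix (Fin N) (Fin N) ℂ) :=
  map_one (RingHom.mapMatrix (Complex.ofRealHom) :
    Matrix (Fin N) (Fin N) ℝ →+* Matrix (Fin N) (Fin N) ℂ)

/-- matrix version of `tendsto_end_pow` -/
lemma matrix_tendsto_of_genEig {M : Matrix (Fin N) (Fin N) ℂ} {μ : ℂ} {k : ℕ}
    {v : Fin N → ℂ} (hμ : ‖μ‖ < 1)
    (hv : (((Matrix.toLinAlgEquiv' M : Module.End ℂ (Fin N → ℂ)) - μ • 1) ^ k) v = 0) :
    Tendsto (fun n : ℕ => (M ^ n).mulVec v) atTop (nhds 0) := by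
  have h := tendsto_end_pow hμ hv
  apply h.congr
  intro n
  have h1 : (Matrix.toLinAlgEquiv' M : Module.End ℂ (Fin N → ℂ)) ^ n
      = Matrix.toLinAlgEquiv' (M ^ n) := (map_pow (Matrix.toLinAlgEquiv') M n).symm
  rw [h1, Matrix.toLinAlgEquiv'_apply]

/-- real parts: applying a real matrix commutes with taking real parts -/
lemma re_mulVec (M : Matrix (Fin N) (Fin N) ℝ) (w : Fin N → ℂ) :
    M.mulVec (fun i => (w i).re) = fun i => (((M.map (Complex.ofReal ·)).mulVec w) i).re := by
  funext i
  simp only [Matrix.mulVec, dotProduct, Matrix.map_apply]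
  rw [Complex.re_sum]
  apply Finset.sum_congr rfl
  intro j _
  simp [Complex.mul_re]

lemma tendsto_re_vec {w : ℕ → Fin N → ℂ} (hw : Tendsto w atTop (nhds 0)) :
    Tendsto (fun n => fun i => (w n i).re) atTop (nhds 0) := by
  rw [tendsto_pi_nhds] at hw ⊢
  intro i
  have := hw i
  have hcont := (Complex.continuous_re.tendsto (0 : ℂ))
  have h2 := hcont.comp this
  simpa [Function.comp_def] using h2

/-- The splitting `ℝ^N = E^s + E^u` for a hyperbolic invertible matrix. -/
lemma splitting (B : Matrix (Fin N) (Fin N) ℝ) (hB : IsUnit B.det)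
    (hhyp : ∀ μ ∈ spectrum ℂ (B.map (Complex.ofReal ·)), ‖μ‖ ≠ 1)
    (y : Fin N → ℝ) :
    ∃ ys ∈ stableSetD B, ∃ yu ∈ unstableSetD B, y = ys + yu := by
  classical
  set A : Matrix (Fin N) (Fin N) ℂ := B.map (Complex.ofReal ·) with hA
  set A' : Matrix (Fin N) (Fin N) ℂ := (B⁻¹).map (Complex.ofReal ·) with hA'
  have hBB : B * B⁻¹ = 1 := Matrix.mul_nonsing_inv B hB
  have hBB' : B⁻¹ * B = 1 := Matrix.nonsing_inv_mul B hB
  have hAA' : A * A' = 1 := by rw [hA, hA', ← mapC_mul, hBB, mapC_one]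
  have hA'A : A' * A = 1 := by rw [hA, hA', ← mapC_mul, hBB', mapC_one]
  set f : Module.End ℂ (Fin N → ℂ) := Matrix.toLinAlgEquiv' A with hf
  set f' : Module.End ℂ (Fin N → ℂ) := Matrix.toLinAlgEquiv' A' with hf'
  have hff' : f * f' = 1 := by
    rw [hf, hf', ← _root_.map_mul, hAA', _root_.map_one]
  have hf'f : f' * f = 1 := by
    rw [hf, hf', ← _root_.map_mul, hA'A, _root_.map_one]
  set Sc : Submodule ℂ (Fin N → ℂ) :=
    ⨆ μ : {μ : ℂ // ‖μ‖ < 1}, f.maxGenEigenspace μ.1 with hSc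
  set Uc : Submodule ℂ (Fin N → ℂ) :=
    ⨆ μ : {μ : ℂ // 1 < ‖μ‖}, f.maxGenEigenspace μ.1 with hUc
  have htop := Module.End.iSup_maxGenEigenspace_eq_top f
  have hle : ∀ μ : ℂ, f.maxGenEigenspace μ ≤ Sc ⊔ Uc := by
    intro μ
    rcases lt_trichotomy (‖μ‖) 1 with h | h | h
    · exact le_sup_of_le_left
        (le_iSup (fun ν : {ν : ℂ // ‖ν‖ < 1} => f.maxGenEigenspace ν.1) ⟨μ, h⟩)
    · have hbot : f.maxGenEigenspace μ = ⊥ := by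
        by_contra hne
        obtain ⟨x, hx, hx0⟩ := Submodule.exists_mem_ne_zero_of_ne_bot hne
        rw [Module.End.mem_maxGenEigenspace] at hx
        obtain ⟨k, hk⟩ := hx
        have hgen : f.HasGenEigenvalue μ k := by
          rw [Module.End.hasGenEigenvalue_iff]
          intro hbot'
          have : x ∈ f.genEigenspace μ k := by
            rw [Module.End.mem_genEigenspace_nat, LinearMap.mem_ker]
            exact hk
          rw [hbot'] at this
          exact hx0 (Submodule.mem_bot _ |>.mp this)
        have hev := Module.End.hasEigenvalue_of_hasGenEigenvalue hgen
        have hspec := Module.End.hasEigenvalue_iff_mem_spectrum.mp hev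
        rw [AlgEquiv.spectrum_eq (Matrix.toLinAlgEquiv') A] at hspec
        exact hhyp μ hspec h
      rw [hbot]
      exact bot_le
    · exact le_sup_of_le_right
        (le_iSup (fun ν : {ν : ℂ // 1 < ‖ν‖} => f.maxGenEigenspace ν.1) ⟨μ, h⟩)
  have hmem : cvec y ∈ Sc ⊔ Uc := by
    have h1 : (⊤ : Submodule ℂ (Fin N → ℂ)) ≤ Sc ⊔ Uc := by
      rw [← htop]; exact iSup_le hle
    exact h1 Submodule.mem_top
  rw [Submodule.mem_sup] at hmem
  obtain ⟨a, ha, c, hc, hac⟩ := hmem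
  -- elements of Sc are complex-stable under A
  have hstab : ∀ w ∈ Sc, Tendsto (fun n : ℕ => (A ^ n).mulVec w) atTop (nhds 0) := by
    intro w hw
    refine Submodule.iSup_induction
      (motive := fun v => Tendsto (fun n : ℕ => (A ^ n).mulVec v) atTop (nhds 0)) _ hw ?_ ?_ ?_
    · rintro ⟨μ, hμ⟩ x hx
      rw [Module.End.mem_maxGenEigenspace] at hx
      obtain ⟨k, hk⟩ := hx
      have hk' : (((Matrix.toLinAlgEquiv' A : Module.End ℂ (Fin N → ℂ)) - μ • 1) ^ k) x = 0 := hk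
      exact matrix_tendsto_of_genEig hμ hk'
    · simpa using tendsto_const_nhds
    · intro x z hx hz
      have := hx.add hz
      simpa [Matrix.mulVec_add] using this
  -- elements of Uc are complex-stable under A'
  have hunst : ∀ w ∈ Uc, Tendsto (fun n : ℕ => (A' ^ n).mulVec w) atTop (nhds 0) := by
    intro w hw
    refine Submodule.iSup_induction
      (motive := fun v => Tendsto (fun n : ℕ => (A' ^ n).mulVec v) atTop (nhds 0)) _ hw ?_ ?_ ?_
    · rintro ⟨μ, hμ⟩ x hx
      rw [Module.End.mem_maxGenEigenspace] at hx
      obtain ⟨k, hk⟩ := hx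
      have hk' : ((f - μ • 1) ^ k) x = 0 := hk
      have hμ0 : μ ≠ 0 := by
        intro h0
        rw [h0] at hμ
        simp at hμ
        linarith
      -- transfer to a generalized eigenvector of f' with eigenvalue μ⁻¹
      have hcomm1 : Commute f' (f - μ • 1) := by
        have h1 : Commute f' f := by
          unfold Commute SemiconjBy
          rw [hf'f, hff']
        have h2 : Commute f' (μ • (1 : Module.End ℂ (Fin N → ℂ))) :=
          (Commute.one_right f').smul_right μ
        exact h1.sub_right h2
      have hkey : f' - μ⁻¹ • 1 = (-μ⁻¹) • (f' * (f - μ • 1)) := by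
        have h1 : f' * (f - μ • 1) = 1 - μ • f' := by
          rw [mul_sub, hf'f, mul_smul_comm, mul_one]
        rw [h1, smul_sub, smul_smul, neg_mul, inv_mul_cancel₀ hμ0]
        module
      have hpow : ((f' - μ⁻¹ • 1) ^ k) x = 0 := by
        rw [hkey, smul_pow, hcomm1.mul_pow]
        rw [LinearMap.smul_apply, Module.End.mul_apply, hk']
        simp
      have habs : ‖μ⁻¹‖ < 1 := by
        rw [norm_inv]
        rw [inv_lt_one_iff₀]
        right; exact hμ
      exact matrix_tendsto_of_genEig habs hpow
    · simpa using tendsto_const_nhds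
    · intro x z hx hz
      have := hx.add hz
      simpa [Matrix.mulVec_add] using this
  refine ⟨fun i => (a i).re, ?_, fun i => (c i).re, ?_, ?_⟩
  · unfold stableSetD
    simp only [Set.mem_setOf_eq]
    have h1 := tendsto_re_vec (hstab a ha)
    apply h1.congr
    intro n
    rw [re_mulVec, mapC_pow]
  · unfold unstableSetD
    simp only [Set.mem_setOf_eq]
    have h1 := tendsto_re_vec (hunst c hc)
    apply h1.congr
    intro n
    rw [re_mulVec, mapC_pow]
  · funext i
    have : (a + c) i = (cvec y) i := by rw [hac]
    have h2 : (a i).re + (c i).re = ((a + c) i).re := by simp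
    rw [this] at h2
    simpa [cvec] using h2.symm

end splitting
section config

variable {N : ℕ}

lemma tendsto_cvec_pair {α : Type*} {l : Filter α} {xf yf : α → Fin N → ℝ}
    {x y : Fin N → ℝ} (hx : Tendsto xf l (nhds x)) (hy : Tendsto yf l (nhds y)) :
    Tendsto (fun a => cvec (xf a) + Complex.I • cvec (yf a)) l
      (nhds (cvec x + Complex.I • cvec y)) :=
  (((continuous_cvec.tendsto x).comp hx).add
    (((continuous_cvec.tendsto y).comp hy).const_smul Complex.I))

lemma configCore (B : Matrix (Fin N) (Fin N) ℝ) (U : Set (Fin N → ℂ))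
    (hpd : ∀ K : Set (Fin N → ℂ), IsCompact K → K ⊆ U →
      Set.Finite {g : (Fin N → ℤ) × ℤ | ∃ z ∈ K, discAct B g z ∈ K})
    {Pc Qc : Fin N → ℂ} {ρP ρQ : ℝ} (hρP : 0 < ρP) (hρQ : 0 < ρQ)
    (hPU : Metric.closedBall Pc ρP ⊆ U) (hQU : Metric.closedBall Qc ρQ ⊆ U)
    (g : ℕ → (Fin N → ℤ) × ℤ)
    (hg : Tendsto (fun j => ((g j).2).natAbs) atTop atTop)
    (ζ : ℕ → Fin N → ℂ) (hζ : Tendsto ζ atTop (nhds Pc))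
    (himg : Tendsto (fun j => discAct B (g j) (ζ j)) atTop (nhds Qc)) : False := by
  set K : Set (Fin N → ℂ) := Metric.closedBall Pc ρP ∪ Metric.closedBall Qc ρQ with hK
  have hcomp : IsCompact K := (isCompact_closedBall _ _).union (isCompact_closedBall _ _)
  have hsub : K ⊆ U := Set.union_subset hPU hQU
  have hfin := hpd K hcomp hsub
  have h1 : ∀ᶠ j in atTop, ζ j ∈ Metric.closedBall Pc ρP :=
    hζ.eventually_mem (Metric.closedBall_mem_nhds _ hρP)
  have h2 : ∀ᶠ j in atTop, discAct B (g j) (ζ j) ∈ Metric.closedBall Qc ρQ :=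
    himg.eventually_mem (Metric.closedBall_mem_nhds _ hρQ)
  obtain ⟨J, hJ⟩ := (h1.and h2).exists_forall_of_atTop
  have hmemS : ∀ j, J ≤ j → g j ∈ {g : (Fin N → ℤ) × ℤ | ∃ z ∈ K, discAct B g z ∈ K} := by
    intro j hj
    exact ⟨ζ j, Or.inl (hJ j hj).1, Or.inr (hJ j hj).2⟩
  have himfin : ((fun p : (Fin N → ℤ) × ℤ => p.2.natAbs) ''
      {g : (Fin N → ℤ) × ℤ | ∃ z ∈ K, discAct B g z ∈ K}).Finite := hfin.image _
  obtain ⟨C, hC⟩ := himfin.bddAbove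
  have hev : ∀ᶠ j in atTop, C + 1 ≤ ((g j).2).natAbs := hg.eventually_ge_atTop (C + 1)
  obtain ⟨j, hj1, hj2⟩ := ((eventually_ge_atTop J).and hev).exists
  have : ((g j).2).natAbs ≤ C := hC ⟨g j, hmemS j hj1, rfl⟩
  omega

lemma configFire (B : Matrix (Fin N) (Fin N) ℝ) (U : Set (Fin N → ℂ))
    (hpd : ∀ K : Set (Fin N → ℂ), IsCompact K → K ⊆ U →
      Set.Finite {g : (Fin N → ℤ) × ℤ | ∃ z ∈ K, discAct B g z ∈ K})
    (M : Matrix (Fin N) (Fin N) ℝ) (e : ℕ → ℤ)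
    (h1 : ∀ k : ℕ, mzpow B (e k) = M ^ k) (habs : ∀ k : ℕ, (e k).natAbs = k)
    (hcan : M * M⁻¹ = 1)
    (xs xt ys yt : Fin N → ℝ)
    (hysS : Tendsto (fun n : ℕ => (M ^ n).mulVec ys) atTop (nhds 0))
    (hytU : Tendsto (fun n : ℕ => (M⁻¹ ^ n).mulVec yt) atTop (nhds 0))
    (hPc : ∃ ρ > 0, Metric.closedBall (cvec xs + Complex.I • cvec ys) ρ ⊆ U)
    (hQc : ∃ ρ > 0, Metric.closedBall (cvec xt + Complex.I • cvec yt) ρ ⊆ U)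
    (happrox : ∀ ε > 0, ∀ Mn : ℕ, ∃ (b : Fin N → ℤ) (k : ℕ), Mn ≤ k ∧
      dist ((M ^ k).mulVec xs + (fun i => (b i : ℝ))) xt < ε) : False := by
  obtain ⟨ρP, hρP, hPU⟩ := hPc
  obtain ⟨ρQ, hρQ, hQU⟩ := hQc
  have hchoose : ∀ j : ℕ, ∃ (b : Fin N → ℤ) (k : ℕ), j ≤ k ∧
      dist ((M ^ k).mulVec xs + (fun i => (b i : ℝ))) xt < 1 / (j + 1) :=
    fun j => happrox (1 / (j + 1)) (by positivity) j
  choose b k hk hdist using hchoose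
  have hktend : Tendsto k atTop atTop := tendsto_atTop_mono hk tendsto_id
  set g : ℕ → (Fin N → ℤ) × ℤ := fun j => (b j, e (k j)) with hgdef
  have hg : Tendsto (fun j => ((g j).2).natAbs) atTop atTop := by
    have : (fun j => ((g j).2).natAbs) = k := by
      funext j; rw [hgdef]; exact habs (k j)
    rw [this]; exact hktend
  set ζ : ℕ → Fin N → ℂ :=
    fun j => cvec xs + Complex.I • cvec (ys + (M⁻¹ ^ (k j)).mulVec yt) with hζdef
  have hζ : Tendsto ζ atTop (nhds (cvec xs + Complex.I • cvec ys)) := by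
    have h2 : Tendsto (fun j => ys + (M⁻¹ ^ (k j)).mulVec yt) atTop (nhds ys) := by
      have h3 : Tendsto (fun j => (M⁻¹ ^ (k j)).mulVec yt) atTop (nhds 0) :=
        hytU.comp hktend
      have := (tendsto_const_nhds (x := ys) (f := atTop)).add h3
      simpa using this
    exact tendsto_cvec_pair tendsto_const_nhds h2
  have himg : Tendsto (fun j => discAct B (g j) (ζ j)) atTop
      (nhds (cvec xt + Complex.I • cvec yt)) := by
    have heq : ∀ j, discAct B (g j) (ζ j)
        = cvec ((M ^ (k j)).mulVec xs + fun i => (b j i : ℝ))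
          + Complex.I • cvec ((M ^ (k j)).mulVec ys + yt) := by
      intro j
      rw [hζdef, hgdef]
      rw [discAct_decomp, h1]
      congr 2
      rw [Matrix.mulVec_add, Matrix.mulVec_mulVec, pow_cancel hcan, Matrix.one_mulVec]
    have hre : Tendsto (fun j => (M ^ (k j)).mulVec xs + fun i => (b j i : ℝ))
        atTop (nhds xt) := by
      rw [tendsto_iff_dist_tendsto_zero]
      apply squeeze_zero (fun j => dist_nonneg)
        (fun j => le_of_lt (hdist j))
      exact tendsto_one_div_add_atTop_nhds_zero_nat
    have him : Tendsto (fun j => (M ^ (k j)).mulVec ys + yt) atTop (nhds yt) := by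
      have h3 : Tendsto (fun j => (M ^ (k j)).mulVec ys) atTop (nhds 0) :=
        hysS.comp hktend
      have := h3.add (tendsto_const_nhds (x := yt) (f := atTop))
      simpa using this
    have := tendsto_cvec_pair hre him
    apply this.congr
    intro j
    exact (heq j).symm
  exact configCore B U hpd hρP hρQ hPU hQU g hg ζ hζ himg

end config

section mainlem

variable {N : ℕ}

lemma dist_cvec_pair (x x' y : Fin N → ℝ) :
    dist (cvec x + Complex.I • cvec y) (cvec x' + Complex.I • cvec y) = dist x x' := by
  rw [dist_eq_norm, dist_eq_norm]
  have : (cvec x + Complex.I • cvec y) - (cvec x' + Complex.I • cvec y)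
      = cvec (x - x') := by rw [cvec_sub]; abel
  rw [this, norm_cvec]

end mainlem

/-- If `B` has no eigenvalue of modulus `1`, `U ⊆ ℂ^N` is a `ℤ^N ⋊_B ℤ`-invariant open
set on which the action is properly discontinuous, and almost every real point has a
dense orbit in `ℝ^N`, then `U ⊆ U⁺` or `U ⊆ U⁻`. -/
theorem discrete_unique_maximal {N : ℕ} (B : Matrix (Fin N) (Fin N) ℝ)
    (hhyp : ∀ μ ∈ spectrum ℂ (B.map (Complex.ofReal ·)), ‖μ‖ ≠ 1)
    (U : Set (Fin N → ℂ)) (hUopen : IsOpen U)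
    (hUinv : ∀ g : (Fin N → ℤ) × ℤ, ∀ z ∈ U, discAct B g z ∈ U)
    (hpd : ∀ K : Set (Fin N → ℂ), IsCompact K → K ⊆ U →
      Set.Finite {g : (Fin N → ℤ) × ℤ | ∃ z ∈ K, discAct B g z ∈ K})
    (hae : ∀ᵐ x ∂(volume : Measure (Fin N → ℝ)),
      Dense {y : Fin N → ℝ | ∃ (b : Fin N → ℤ) (n : ℤ),
        y = (mzpow B n).mulVec x + fun i => (b i : ℝ)}) :
    U ⊆ UplusD B ∨ U ⊆ UminusD B := by
  
  by_contra hcon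
  push_neg at hcon
  obtain ⟨h1, h2⟩ := hcon
  rw [Set.not_subset] at h1 h2
  obtain ⟨z₁, hz₁U, hz₁⟩ := h1
  obtain ⟨z₂, hz₂U, hz₂⟩ := h2
  -- Case N = 0 : properness fails outright
  rcases Nat.eq_zero_or_pos N with hN0 | hN
  · subst hN0
    have hfin := hpd {z₁} isCompact_singleton (Set.singleton_subset_iff.mpr hz₁U)
    have huniv : {g : (Fin 0 → ℤ) × ℤ | ∃ z ∈ ({z₁} : Set (Fin 0 → ℂ)),
        discAct B g z ∈ ({z₁} : Set (Fin 0 → ℂ))} = Set.univ := by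
      apply Set.eq_univ_of_forall
      intro g
      refine ⟨z₁, rfl, ?_⟩
      have : discAct B g z₁ = z₁ := funext (fun i => i.elim0)
      simp [this]
    rw [huniv] at hfin
    exact Set.infinite_univ hfin
  -- Case B singular : U ⊆ U⁻, contradiction with z₂
  by_cases hB : IsUnit B.det
  swap
  · -- singular case
    have hdet : B.det = 0 := by
      by_contra hd
      exact hB (isUnit_iff_ne_zero.mpr hd)
    obtain ⟨x₀, hx₀ne, hx₀⟩ := (Matrix.exists_mulVec_eq_zero_iff).mpr hdet
    have hx₀s : x₀ ∈ stableSetD B := by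
      unfold stableSetD
      simp only [Set.mem_setOf_eq]
      apply tendsto_const_nhds.congr'
      filter_upwards [eventually_ge_atTop 1] with n hn
      have : B ^ n = B ^ (n - 1) * B := by
        rw [← pow_succ]; congr 1; omega
      rw [this, ← Matrix.mulVec_mulVec, hx₀, Matrix.mulVec_zero]
    have huniv : ∀ y : Fin N → ℝ, y ∈ unstableSetD B := by
      intro y
      unfold unstableSetD
      simp only [Set.mem_setOf_eq]
      have hinv : B⁻¹ = 0 := Matrix.nonsing_inv_apply_not_isUnit B hB
      apply tendsto_const_nhds.congr'
      filter_upwards [eventually_ge_atTop 1] with n hn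
      rw [hinv, zero_pow (by omega), Matrix.zero_mulVec]
    exact hz₂ ⟨x₀, hx₀s, (fun i => (z₂ i).im) - x₀, huniv _, by abel, hx₀ne⟩
  -- Main case : B invertible, N ≥ 1
  have hBB : B * B⁻¹ = 1 := Matrix.mul_nonsing_inv B hB
  have hBB' : B⁻¹ * B = 1 := Matrix.nonsing_inv_mul B hB
  -- imaginary parts lie in the stable/unstable spaces
  obtain ⟨ys1, hys1, yu1, hyu1, hsum1⟩ := splitting B hB hhyp (fun i => (z₁ i).im)
  have hyu10 : yu1 = 0 := by
    by_contra hne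
    exact hz₁ ⟨ys1, hys1, yu1, hyu1, hsum1, hne⟩
  have hIm1 : (fun i => (z₁ i).im) = ys1 := by rw [hsum1, hyu10, add_zero]
  obtain ⟨ys2, hys2, yu2, hyu2, hsum2⟩ := splitting B hB hhyp (fun i => (z₂ i).im)
  have hys20 : ys2 = 0 := by
    by_contra hne
    exact hz₂ ⟨ys2, hys2, yu2, hyu2, hsum2, hne⟩
  have hIm2 : (fun i => (z₂ i).im) = yu2 := by rw [hsum2, hys20, zero_add]
  set y₁ : Fin N → ℝ := ys1 with hy₁def
  set y₂ : Fin N → ℝ := yu2 with hy₂def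
  set xb₁ : Fin N → ℝ := fun i => (z₁ i).re with hxb₁
  set xb₂ : Fin N → ℝ := fun i => (z₂ i).re with hxb₂
  have hz₁eq : z₁ = cvec xb₁ + Complex.I • cvec y₁ := by
    rw [← hIm1]; exact reIm_eq z₁
  have hz₂eq : z₂ = cvec xb₂ + Complex.I • cvec y₂ := by
    rw [← hIm2]; exact reIm_eq z₂
  -- radii around z₁ and z₂
  obtain ⟨ε₁, hε₁, hball₁sub⟩ := Metric.isOpen_iff.mp hUopen z₁ hz₁U
  obtain ⟨ε₂, hε₂, hball₂sub⟩ := Metric.isOpen_iff.mp hUopen z₂ hz₂U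
  have hball₁ : ∀ x : Fin N → ℝ, dist x xb₁ < ε₁ → (cvec x + Complex.I • cvec y₁) ∈ U := by
    intro x hx
    apply hball₁sub
    rw [Metric.mem_ball, hz₁eq, dist_cvec_pair]
    exact hx
  have hball₂ : ∀ x : Fin N → ℝ, dist x xb₂ < ε₂ → (cvec x + Complex.I • cvec y₂) ∈ U := by
    intro x hx
    apply hball₂sub
    rw [Metric.mem_ball, hz₂eq, dist_cvec_pair]
    exact hx
  -- the conull set of points with dense orbits
  set G : Set (Fin N → ℝ) := {x | Dense {y : Fin N → ℝ | ∃ (b : Fin N → ℤ) (n : ℤ),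
    y = (mzpow B n).mulVec x + fun i => (b i : ℝ)}} with hGdef
  have hGc : (volume : Measure (Fin N → ℝ)) Gᶜ = 0 := by
    rw [hGdef]
    have := hae
    rw [MeasureTheory.ae_iff] at this
    convert this using 2
    rfl
  -- pick a good point near xb₂
  obtain ⟨x₂s, hx₂sG, hx₂sd⟩ := conull_inter_ball hGc xb₂ hε₂
  have hz₂s : (cvec x₂s + Complex.I • cvec y₂) ∈ U := hball₂ x₂s hx₂sd
  -- transport the unstable witness near xb₁ using the dense orbit of x₂s
  have hden₂ : Dense {y : Fin N → ℝ | ∃ (b : Fin N → ℤ) (n : ℤ),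
      y = (mzpow B n).mulVec x₂s + fun i => (b i : ℝ)} := hx₂sG
  obtain ⟨p', hp'⟩ := Metric.dense_iff.mp hden₂ xb₁ (ε₁ / 2) (by positivity)
  obtain ⟨c₀, e₀, hp'eq⟩ := hp'.2
  have hp'dist : dist p' xb₁ < ε₁ / 2 := Metric.mem_ball.mp hp'.1
  -- the transported unstable witness
  set w' : Fin N → ℝ := (mzpow B e₀).mulVec y₂ with hw'def
  have hw'u : w' ∈ unstableSetD B := unstable_mzpow_mem hBB' e₀ hyu2
  set P' : Fin N → ℂ := cvec p' + Complex.I • cvec w' with hP'def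
  have hP'U : P' ∈ U := by
    have h3 := hUinv (c₀, e₀) _ hz₂s
    rw [discAct_decomp] at h3
    rw [hP'def, hp'eq, hw'def]
    exact h3
  obtain ⟨rU, hrU, hrUsub⟩ := Metric.isOpen_iff.mp hUopen P' hP'U
  -- pick a good point very close to p'
  set δ : ℝ := min (ε₁ / 2) (rU / 4) with hδdef
  have hδpos : 0 < δ := by rw [hδdef]; positivity
  obtain ⟨x', hx'G, hx'd⟩ := conull_inter_ball hGc p' hδpos
  have hx'ball₁ : dist x' xb₁ < ε₁ := by
    calc dist x' xb₁ ≤ dist x' p' + dist p' xb₁ := dist_triangle _ _ _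
      _ < δ + ε₁ / 2 := by apply add_lt_add hx'd hp'dist
      _ ≤ ε₁ / 2 + ε₁ / 2 := by
          apply add_le_add_left
          rw [hδdef]; exact min_le_left _ _
      _ = ε₁ := by ring
  have hz₁' : (cvec x' + Complex.I • cvec y₁) ∈ U := hball₁ x' hx'ball₁
  -- the stable witness transported near xb₂ using the dense orbit of x'
  have hden' : Dense {y : Fin N → ℝ | ∃ (b : Fin N → ℤ) (n : ℤ),
      y = (mzpow B n).mulVec x' + fun i => (b i : ℝ)} := hx'G
  obtain ⟨q, hq⟩ := Metric.dense_iff.mp hden' xb₂ ε₂ hε₂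
  obtain ⟨β₀, n₀, hqeq⟩ := hq.2
  have hqdist : dist q xb₂ < ε₂ := Metric.mem_ball.mp hq.1
  set y' : Fin N → ℝ := (mzpow B n₀).mulVec y₁ with hy'def
  have hy's : y' ∈ stableSetD B := stable_mzpow_mem hBB n₀ hys1
  set Q : Fin N → ℂ := cvec q + Complex.I • cvec y' with hQdef
  have hQU : Q ∈ U := by
    have h3 := hUinv (β₀, n₀) _ hz₁'
    rw [discAct_decomp] at h3
    rw [hQdef, hqeq, hy'def]
    exact h3
  obtain ⟨rQ, hrQ, hrQsub⟩ := Metric.isOpen_iff.mp hUopen Q hQU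
  -- the two closed balls around the source/target witnesses
  obtain ⟨r₁, hr₁, hr₁sub⟩ := Metric.isOpen_iff.mp hUopen _ hz₁'
  have hq₂ : (cvec q + Complex.I • cvec y₂) ∈ U := hball₂ q hqdist
  obtain ⟨r₂, hr₂, hr₂sub⟩ := Metric.isOpen_iff.mp hUopen _ hq₂
  -- sign dichotomy for approximations of q by the orbit of x'
  rcases sign_dichotomy B hN hden' q with hplus | hminus
  · -- forward case : configuration A with M = B
    refine configFire B U hpd B (fun k => (k : ℤ)) (fun k => mzpow_natCast B k)
      (fun k => Int.natAbs_natCast k) hBB x' q y₁ y₂ hys1 hyu2 ?_ ?_ hplus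
    · exact ⟨r₁ / 2, by positivity,
        (Metric.closedBall_subset_ball (by linarith)).trans hr₁sub⟩
    · exact ⟨r₂ / 2, by positivity,
        (Metric.closedBall_subset_ball (by linarith)).trans hr₂sub⟩
  · -- backward case : configuration B with M = B⁻¹
    have hinvinv : B⁻¹⁻¹ = B := Matrix.nonsing_inv_nonsing_inv B hB
    have hcan' : B⁻¹ * B⁻¹⁻¹ = 1 := by rw [hinvinv]; exact hBB'
    refine configFire B U hpd B⁻¹ (fun k => -(k : ℤ)) (fun k => mzpow_neg_natCast B k)
      (fun k => by simp) hcan' x' q w' y' hw'u ?_ ?_ ?_ hminus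
    · -- y' is "unstable" for B⁻¹, i.e. stable for B
      have : Tendsto (fun n : ℕ => (B ^ n).mulVec y') atTop (nhds 0) := hy's
      apply this.congr
      intro n
      rw [hinvinv]
    · -- closed ball around cvec x' + I cvec w' inside U
      refine ⟨rU / 4, by positivity, ?_⟩
      intro z hz
      apply hrUsub
      rw [Metric.mem_ball]
      have hd1 : dist z P' ≤ dist z (cvec x' + Complex.I • cvec w') + 
          dist (cvec x' + Complex.I • cvec w') P' := dist_triangle _ _ _
      have hd2 : dist (cvec x' + Complex.I • cvec w') P' = dist x' p' := by
        rw [hP'def, dist_cvec_pair]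
      rw [Metric.mem_closedBall] at hz
      have hd3 : dist x' p' < rU / 4 := lt_of_lt_of_le hx'd (by rw [hδdef]; exact min_le_right _ _)
      rw [hd2] at hd1
      linarith
    · -- closed ball around cvec q + I cvec y' = Q inside U
      refine ⟨rQ / 2, by positivity, ?_⟩
      rw [← hQdef]
      exact (Metric.closedBall_subset_ball (by linarith)).trans hrQsub
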